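/- For all n ≥ 1, the word obtained from φⁿ(2) by extracting the middle letter of each consecutive block of three (i.e., the letters at positions ≡ 1 mod 3) equals φ^{n−1}(2). -/
import Mathlib


/-- Letters: `0,1,2` represent `1,2,3`. `sigmaM` exchanges letters 1 and 2. -/
def sigmaM : Fin 3 → Fin 3
  | 0 => 1
  | 1 => 0
  | 2 => 2

/-- `rhoM` exchanges letters 2 and 3. -/
def rhoM : Fin 3 → Fin 3
  | 0 => 0
  | 1 => 2
  | 2 => 1

/-- `phi a = σ(a) · a · ρ(a)`. -/
def phi (a : List (Fin 3)) : List (Fin 3) := a.map sigmaM ++ a ++ a.map rhoM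

/-- Kurosaki word `φⁿ(2)` (the letter 2 is encoded as `1 : Fin 3`). -/
def K (n : ℕ) : List (Fin 3) := phi^[n] [1]

/-- `w` has period `p`. -/
def HasPeriod (w : List (Fin 3)) (p : ℕ) : Prop :=
  0 < p ∧ ∀ i, i + p < w.length → w[i]! = w[i + p]!

def IsLeastPeriod (w : List (Fin 3)) (p : ℕ) : Prop :=
  HasPeriod w p ∧ ∀ q, HasPeriod w q → p ≤ q

/-- every factor has exponent at most 7/4. -/
def Avoids74 (w : List (Fin 3)) : Prop :=
  ∀ x p, x <:+: w → x ≠ [] → IsLeastPeriod x p → 4 * x.length ≤ 7 * p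

/-- `w` contains no nonempty factor of the form `x ++ x`. -/
def SqFree (w : List (Fin 3)) : Prop :=
  ∀ x : List (Fin 3), x ≠ [] → ¬ (x ++ x) <:+: w

/-- the triple of `w` at positions `3k, 3k+1, 3k+2` is a permutation of `123`. -/
def TripleDistinct (w : List (Fin 3)) : Prop :=
  ∀ k, 3 * k + 2 < w.length →
    w[3 * k]! ≠ w[3 * k + 1]! ∧ w[3 * k]! ≠ w[3 * k + 2]! ∧ w[3 * k + 1]! ≠ w[3 * k + 2]!

lemma phi_length (u : List (Fin 3)) : (phi u).length = 3 * u.length := by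
  simp [phi]; ring

lemma K_succ (n : ℕ) : K (n+1) = phi (K n) := by
  simp [K, Function.iterate_succ_apply']

lemma K_length (n : ℕ) : (K n).length = 3 ^ n := by
  induction n with
  | zero => simp [K]
  | succ n ih => rw [K_succ, phi_length, ih]; ring

lemma phi_get_left (u : List (Fin 3)) (i : ℕ) (h : i < u.length) :
    (phi u)[i]! = sigmaM (u[i]!) := by
  have h1 : i < (phi u).length := by rw [phi_length]; omega
  rw [getElem!_pos (phi u) _ h1, getElem!_pos u _ h]
  simp [phi, List.getElem_append_left, List.getElem_append, h]

lemma phi_get_mid (u : List (Fin 3)) (i : ℕ) (h : i < u.length) :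
    (phi u)[u.length + i]! = u[i]! := by
  have h1 : u.length + i < (phi u).length := by rw [phi_length]; omega
  rw [getElem!_pos (phi u) _ h1, getElem!_pos u _ h]
  simp [phi, List.getElem_append, h]

lemma phi_get_right (u : List (Fin 3)) (i : ℕ) (h : i < u.length) :
    (phi u)[2 * u.length + i]! = rhoM (u[i]!) := by
  have h1 : 2 * u.length + i < (phi u).length := by rw [phi_length]; omega
  rw [getElem!_pos (phi u) _ h1, getElem!_pos u _ h]
  simp only [phi, List.getElem_append, List.getElem_map, List.length_append,
    List.length_map]
  rw [dif_neg (by omega)]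
  congr 2
  omega

lemma key : ∀ n : ℕ, ∀ i : ℕ, i < 3 ^ n → (K (n+1))[3*i+1]! = (K n)[i]! := by
  intro n
  induction n with
  | zero =>
    intro i hi
    interval_cases i
    rfl
  | succ n ih =>
    intro i hi
    have pw : (3:ℕ) ^ (n+1) = 3 * 3 ^ n := by ring
    have lu : (K n).length = 3 ^ n := K_length n
    have lw : (K (n+1)).length = 3 ^ (n+1) := K_length (n+1)
    rw [K_succ (n+1)]
    rcases lt_or_ge i (3 ^ n) with hc | hc
    · have h3 : 3 * i + 1 < (K (n+1)).length := by rw [lw, pw]; omega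
      rw [phi_get_left _ _ h3, ih i hc, K_succ n,
        phi_get_left _ _ (by rw [lu]; exact hc)]
    · rcases lt_or_ge i (2 * 3 ^ n) with hc2 | hc2
      · set j := i - 3 ^ n with hj
        have hjlt : j < 3 ^ n := by omega
        have e : 3 * i + 1 = (K (n+1)).length + (3 * j + 1) := by rw [lw, pw]; omega
        have e2 : i = (K n).length + j := by rw [lu]; omega
        rw [e, phi_get_mid _ _ (by rw [lw, pw]; omega), ih j hjlt, K_succ n, e2,
          phi_get_mid _ _ (by rw [lu]; exact hjlt)]
      · set j := i - 2 * 3 ^ n with hj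
        have hjlt : j < 3 ^ n := by rw [pw] at hi; omega
        have e : 3 * i + 1 = 2 * (K (n+1)).length + (3 * j + 1) := by rw [lw, pw]; omega
        have e2 : i = 2 * (K n).length + j := by rw [lu]; omega
        rw [e, phi_get_right _ _ (by rw [lw, pw]; omega), ih j hjlt, K_succ n, e2,
          phi_get_right _ _ (by rw [lu]; exact hjlt)]

theorem stmt2 : ∀ n : ℕ, 1 ≤ n →
    (List.range (3 ^ (n - 1))).map (fun i => (K n)[3 * i + 1]!) = K (n - 1) := by
  intro n hn
  obtain ⟨m, rfl⟩ : ∃ m, n = m + 1 := ⟨n - 1, by omega⟩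
  simp only [Nat.add_sub_cancel]
  apply List.ext_getElem
  · simp [K_length]
  · intro i h1 h2
    have hi : i < 3 ^ m := by simpa [K_length] using h2
    simp only [List.getElem_map, List.getElem_range]
    rw [← getElem!_pos (K m) i h2]
    exact key m i hi
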